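/- Proposition 2.1(1): If S is a partial cross-section of f = f_{X,Y} in C_{n+1}, then S ⪯ X, i.e., either |S| < |X|, or |S| = |X| and S ≤ X in P_n. -/

import Mathlib

/-- `X ≤ Y` in the poset `Pₙ`: writing `X = {x₁ < ⋯ < x_k}` and `Y = {y₁ < ⋯ < y_l}`,
we require `k = l` and `xᵢ ≤ yᵢ` for all `i` (encoded via `List.Forall₂` on the
sorted enumerations, which forces in particular `|X| = |Y|`). -/
def Ple {α : Type*} [LinearOrder α] (X Y : Finset α) : Prop :=
  List.Forall₂ (· ≤ ·) (X.sort (· ≤ ·)) (Y.sort (· ≤ ·))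

/-- The map `f_{X,Y} : [n+1] → [n+1]` (with `[n+1]` modelled as `Fin (n+1)` and
`[n] ⊆ [n+1]` as the finsets avoiding `Fin.last n`).  Writing `X = {x₁ < ⋯ < x_k}` and
`Y = {y₁ < ⋯ < y_k}`, we have `f_{X,Y}(i) = y₁` for `i ≤ x₁`, `f_{X,Y}(i) = y_j` for
`x_{j-1} < i ≤ x_j`, and `f_{X,Y}(i) = n+1` for `i > x_k`: indeed, the number `c` of
elements of `X` that are `< i` equals `j - 1` exactly when `x_{j-1} < i ≤ x_j`, and the
`(c+1)`-st smallest element of `Y` is produced when `c < |Y|`. -/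
def fXY {n : ℕ} (X Y : Finset (Fin (n+1))) (i : Fin (n+1)) : Fin (n+1) :=
  if h : (X.filter (fun x => x < i)).card < (Y.sort (· ≤ ·)).length then
    (Y.sort (· ≤ ·)).get ⟨(X.filter (fun x => x < i)).card, h⟩
  else Fin.last n

/-- `S` is a partial cross-section of `f : [n+1] → [n+1]`: `S ⊆ [n]`
(i.e. `n+1 ∉ S`, with `n+1` modelled as `Fin.last n`), `n+1 ∉ f(S)`, and `f`
restricted to `S` is injective. -/
def PCS {n : ℕ} (f : Fin (n+1) → Fin (n+1)) : Set (Finset (Fin (n+1))) :=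
  {S | Fin.last n ∉ S ∧ Fin.last n ∉ S.image f ∧ Set.InjOn f ↑S}

/-- Proposition 2.1(1): if `S` is a partial cross-section of `f = f_{X,Y}`, then
`S ⪯ X`, i.e. `|S| < |X|`, or `|S| = |X|` and `S ≤ X` in `Pₙ`. -/
theorem pcs_ple_refined_left (n : ℕ) (X Y : Finset (Fin (n+1)))
    (hX : Fin.last n ∉ X) (hY : Fin.last n ∉ Y) (hXY : Ple X Y)
    (S : Finset (Fin (n+1))) (hS : S ∈ PCS (fXY X Y)) :
    S.card < X.card ∨ (S.card = X.card ∧ Ple S X) := by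
  obtain ⟨hS1, hS2, hS3⟩ := hS
  set c : Fin (n+1) → ℕ := fun i => (X.filter (fun x => x < i)).card with hc
  have hlen : (Y.sort (· ≤ ·)).length = X.card := by
    rw [← hXY.length_eq, Finset.length_sort]
  have hclt : ∀ s ∈ S, c s < X.card := by
    intro s hs
    by_contra h
    have : fXY X Y s = Fin.last n := dif_neg (by rw [hlen]; exact h)
    exact hS2 (Finset.mem_image.mpr ⟨s, hs, this⟩)
  have hcf : ∀ s, (h : c s < X.card) →
      fXY X Y s = (Y.sort (· ≤ ·)).get ⟨c s, by rw [hlen]; exact h⟩ := by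
    intro s h
    exact dif_pos _
  have hinj : ∀ s ∈ S, ∀ t ∈ S, c s = c t → s = t := by
    intro s hs t ht hct
    apply hS3 hs ht
    rw [hcf s (hclt s hs), hcf t (hclt t ht)]
    congr 1
    exact Fin.ext hct
  have hmono : Monotone c := by
    intro i j hij
    exact Finset.card_le_card (Finset.monotone_filter_right X (fun x _ hx => lt_of_lt_of_le hx hij))
  have hcard : S.card ≤ X.card := by
    have := Finset.card_le_card_of_injOn (fun s => c s)
      (fun s hs => Finset.mem_range.mpr (hclt s hs))
      (fun s hs t ht h => hinj s hs t ht h)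
    simpa using this
  rcases lt_or_eq_of_le hcard with h | heq
  · exact Or.inl h
  · refine Or.inr ⟨heq, ?_⟩
    set e := S.orderEmbOfFin rfl with he
    have hgb : ∀ j : Fin S.card, c (e j) < S.card := by
      intro j
      have h := hclt (e j) (S.orderEmbOfFin_mem rfl j)
      omega
    set g : Fin S.card → Fin S.card := fun j => ⟨c (e j), hgb j⟩ with hg
    have hgsm : StrictMono g := by
      intro j j' hjj
      have h1 : e j < e j' := e.strictMono hjj
      have h2 : c (e j) ≤ c (e j') := hmono h1.le
      have h3 : c (e j) ≠ c (e j') := by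
        intro hcc
        have := hinj _ (S.orderEmbOfFin_mem rfl j) _ (S.orderEmbOfFin_mem rfl j') hcc
        exact absurd this h1.ne
      exact Fin.mk_lt_mk.mpr (lt_of_le_of_ne h2 h3)
    have hgid : g = id := by
      have hwf : WellFoundedLT (Fin S.card) := inferInstance
      apply (hgsm.range_inj strictMono_id).1
      have hsurj : Function.Surjective g := Finite.injective_iff_surjective.mp hgsm.injective
      rw [Set.range_id, Set.range_eq_univ.mpr hsurj]
    have hgi : ∀ j : Fin S.card, c (e j) = j := by
      intro j
      have := congrFun hgid j
      simpa [hg] using congrArg Fin.val this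
    rw [Ple, List.forall₂_iff_get]
    constructor
    · simp [heq]
    · intro i h1 h2
      simp only [Finset.length_sort] at h1 h2
      have hgetS : (S.sort (· ≤ ·)).get ⟨i, by simpa⟩ = e ⟨i, h1⟩ := by
        rw [Finset.orderEmbOfFin_apply]; rfl
      have hgetX : (X.sort (· ≤ ·)).get ⟨i, by simpa⟩ = X.orderEmbOfFin rfl ⟨i, h2⟩ := by
        rw [Finset.orderEmbOfFin_apply]; rfl
      simp only [hgetS, hgetX]
      by_contra hlt
      push_neg at hlt
      -- hlt : X.orderEmbOfFin rfl ⟨i, h2⟩ < e ⟨i, h1⟩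
      have hkey : i + 1 ≤ c (e ⟨i, h1⟩) := by
        have := Finset.card_le_card_of_injOn
          (s := Finset.univ) (t := X.filter (fun x => x < e ⟨i, h1⟩))
          (fun l : Fin (i+1) => X.orderEmbOfFin rfl ⟨l, lt_of_le_of_lt (Nat.lt_succ_iff.mp l.2) h2⟩)
          (fun l _ => by
            refine Finset.mem_filter.mpr ⟨X.orderEmbOfFin_mem rfl _, ?_⟩
            refine lt_of_le_of_lt ?_ hlt
            exact (X.orderEmbOfFin rfl).monotone (by simpa using Nat.lt_succ_iff.mp l.2))
          (fun l _ l' _ h => by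
            have h' := (X.orderEmbOfFin rfl).injective h
            have h'' : (l : ℕ) = (l' : ℕ) := congrArg (fun x : Fin X.card => x.val) h'
            exact Fin.ext h'')
        simpa [hc] using this
      rw [hgi ⟨i, h1⟩] at hkey
      have hv : ((⟨i, h1⟩ : Fin S.card) : ℕ) = i := rfl
      omega
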